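/- Let m = 2r−1 be odd, k, n with k+m ≤ n, Z with positive maximal minors, C with positive maximal minors, Y = CZ, B = (b_1,b_1+1,...,b_{r−1},b_{r−1}+1) ⊂ [n]. Suppose i_0 ∈ [n]∖B with 2 ≤ i_0 ≤ n−1, and let i_0^− = max([1,i_0−1]∩B^c), i_0^+ = min([i_0+1,n]∩B^c). Then it is impossible that ⟨Y,B,i_0⟩ = 0 while sign⟨Y,B,i_0^−⟩ = sign⟨Y,B,i_0^+⟩ ≠ 0. -/

import Mathlib

/-- Twistor coordinate. -/
noncomputable def twistor {k m n : ℕ} (Z : Matrix (Fin n) (Fin (k + m)) ℝ)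
    (Y : Matrix (Fin k) (Fin (k + m)) ℝ) (L : Fin m → Fin n) : ℝ :=
  Matrix.det (Matrix.of fun i j : Fin k ⊕ Fin m =>
    Sum.elim (fun a => Y a) (fun b => Z (L b)) i (finSumFinEquiv j))

def PosMaximalMinors {n p : ℕ} (Z : Matrix (Fin n) (Fin p) ℝ) : Prop :=
  ∀ f : Fin p → Fin n, StrictMono f → 0 < Matrix.det (Matrix.of fun a b => Z (f a) b)

def PosRowMinors {k n : ℕ} (C : Matrix (Fin k) (Fin n) ℝ) : Prop :=
  ∀ g : Fin k → Fin n, StrictMono g → 0 < Matrix.det (Matrix.of fun a b => C a (g b))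

def ConsecPairs {m n : ℕ} (I : Fin m → Fin n) : Prop :=
  ∀ a b : Fin m, (a : ℕ) + 1 = (b : ℕ) → (a : ℕ) % 2 = 0 → (I b : ℕ) = (I a : ℕ) + 1

lemma fin_le_apply {c N : ℕ} (f : Fin c → Fin N) (hf : StrictMono f) : ∀ x : Fin c, (x:ℕ) ≤ (f x : ℕ) := by
  have key : ∀ v : ℕ, ∀ x : Fin c, (x:ℕ) = v → v ≤ (f x : ℕ) := by
    intro v
    induction v with
    | zero => intro x _; omega
    | succ w ih =>
      intro x hx
      have hw : w < c := by omega
      have h1 : (⟨w, hw⟩ : Fin c) < x := by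
        simp only [Fin.lt_def]; omega
      have h2 := hf h1
      have h3 := ih ⟨w, hw⟩ rfl
      simp only [Fin.lt_def] at h2
      omega
  intro x; exact key _ x rfl

/-- A downward-closed finset of `Fin N` is an initial segment. -/
lemma seg {N : ℕ} (S : Finset (Fin N)) (down : ∀ a b : Fin N, a ≤ b → b ∈ S → a ∈ S) :
    ∀ t : Fin N, (t ∈ S ↔ (t:ℕ) < S.card) := by
  intro t
  constructor
  · intro ht
    have hsub : Finset.Iic t ⊆ S := by
      intro a ha
      exact down a t (Finset.mem_Iic.mp ha) ht
    have := Finset.card_le_card hsub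
    rw [Fin.card_Iic] at this
    omega
  · intro ht
    set g : Fin S.card → Fin N := fun x => S.orderEmbOfFin rfl x with hg
    have hmono : StrictMono g := (S.orderEmbOfFin rfl).strictMono
    have hle := fin_le_apply g hmono ⟨(t:ℕ), ht⟩
    have hmem : g ⟨(t:ℕ), ht⟩ ∈ S := Finset.orderEmbOfFin_mem S rfl _
    exact down t _ (by simp only [Fin.le_def]; exact hle) hmem

/-- Intermediate value for `ℕ`-valued step functions. -/
lemma ivl (f : ℕ → ℕ) (h0 : f 0 = 0) (hstep : ∀ a, f (a+1) ≤ f a + 1) :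
    ∀ b v, v ≤ f b → ∃ a ≤ b, f a = v := by
  intro b
  induction b with
  | zero => intro v hv; exact ⟨0, le_refl 0, by omega⟩
  | succ c ih =>
    intro v hv
    by_cases hc : v ≤ f c
    · obtain ⟨a, ha, hfa⟩ := ih v hc
      exact ⟨a, by omega, hfa⟩
    · have := hstep c
      exact ⟨c+1, le_refl _, by omega⟩

open Matrix Finset in
lemma lemA {n p : ℕ} (Z : Matrix (Fin n) (Fin p) ℝ) (hZ : PosMaximalMinors Z)
    (α : Fin p → ℝ) (j : Fin (p+1) → Fin n) (hj : StrictMono j) (ε : ℝ) (hε : ε = 1 ∨ ε = -1)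
    (halt : ∀ t : Fin (p+1), 0 ≤ ε * (-1)^(t:ℕ) * (∑ c, Z (j t) c * α c)) : α = 0 := by
  set v : Fin (p+1) → ℝ := fun t => ∑ c, Z (j t) c * α c with hv
  set Δ : Fin (p+1) → ℝ := fun t => Matrix.det (Matrix.of fun a b => Z (j (t.succAbove a)) b) with hΔdef
  have hΔ : ∀ t, 0 < Δ t := fun t => hZ (j ∘ t.succAbove) (hj.comp (Fin.strictMono_succAbove t))
  have hnull : ∀ c : Fin p, (∑ t : Fin (p+1), (-1)^(t:ℕ) * Z (j t) c * Δ t) = 0 := by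
    intro c
    have hQ : Matrix.det ((Matrix.of fun t x =>
        Fin.cases (Z (j t) c) (fun x' => Z (j t) x') x) : Matrix (Fin (p+1)) (Fin (p+1)) ℝ) = 0 := by
      apply Matrix.det_zero_of_column_eq (i := 0) (j := Fin.succ c) (Fin.succ_ne_zero c).symm
      intro t; simp
    rw [Matrix.det_succ_column_zero] at hQ
    rw [← hQ]
    apply Finset.sum_congr rfl
    intro t _
    have e1 : ((Matrix.of fun t x =>
        Fin.cases (Z (j t) c) (fun x' => Z (j t) x') x) : Matrix (Fin (p+1)) (Fin (p+1)) ℝ).submatrix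
        t.succAbove Fin.succ = Matrix.of fun a b => Z (j (t.succAbove a)) b := by
      ext a b; simp [Matrix.submatrix_apply]
    rw [e1]
    simp [hΔdef]
  have hsum : (∑ t : Fin (p+1), ε * (-1)^(t:ℕ) * v t * Δ t) = 0 := by
    have heq : (∑ t : Fin (p+1), ε * (-1)^(t:ℕ) * v t * Δ t)
        = ε * ∑ c : Fin p, (∑ t : Fin (p+1), (-1)^(t:ℕ) * Z (j t) c * Δ t) * α c := by
      have heq1 : ∀ t : Fin (p+1), ε * (-1)^(t:ℕ) * v t * Δ t
          = ∑ c : Fin p, ε * ((-1)^(t:ℕ) * Z (j t) c * Δ t * α c) := by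
        intro t
        simp only [hv, Finset.mul_sum, Finset.sum_mul]
        apply Finset.sum_congr rfl
        intro c _
        ring
      rw [Finset.sum_congr rfl (fun t _ => heq1 t), Finset.sum_comm, Finset.mul_sum]
      apply Finset.sum_congr rfl
      intro c _
      rw [Finset.sum_mul, Finset.mul_sum]
    rw [heq]
    simp [hnull]
  have hterm : ∀ t : Fin (p+1), v t = 0 := by
    have h0 : ∀ t ∈ Finset.univ (α := Fin (p+1)), ε * (-1)^(t:ℕ) * v t * Δ t = 0 := by
      rw [Finset.sum_eq_zero_iff_of_nonneg] at hsum
      · exact hsum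
      · intro t _
        exact mul_nonneg (halt t) (hΔ t).le
    intro t
    have h := h0 t (Finset.mem_univ t)
    have hε' : ε ≠ 0 := by rcases hε with h | h <;> rw [h] <;> norm_num
    have h1 : (ε * (-1)^(t:ℕ)) ≠ 0 := mul_ne_zero hε' (by positivity)
    have h2 : Δ t ≠ 0 := (hΔ t).ne'
    rcases mul_eq_zero.mp h with h3 | h3
    · rcases mul_eq_zero.mp h3 with h4 | h4
      · exact absurd h4 h1
      · exact h4
    · exact absurd h3 h2
  have hdet : Matrix.det (Matrix.of fun a b => Z (j (Fin.castSucc a)) b) ≠ 0 :=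
    (hZ (j ∘ Fin.castSucc) (hj.comp Fin.strictMono_castSucc)).ne'
  apply Matrix.eq_zero_of_mulVec_eq_zero hdet
  funext a
  have h := hterm (Fin.castSucc a)
  simp only [hv] at h
  simpa [Matrix.mulVec, dotProduct, mul_comm] using h

open Matrix Finset in
lemma lemBcore {K N : ℕ} (hk : K + 1 ≤ N + 1) (C : Matrix (Fin (K+1)) (Fin (N+1)) ℝ)
    (hC : PosRowMinors C) (w : Fin (N+1) → ℝ) (hw : ∀ a, ∑ i, C a i * w i = 0)
    (hnz : ∀ i, w i ≠ 0) :
    ∃ ε : ℝ, (ε = 1 ∨ ε = -1) ∧ ∃ j : Fin (K+2) → Fin (N+1), StrictMono j ∧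
      ∀ t : Fin (K+2), 0 < ε * (-1)^(t:ℕ) * w (j t) := by
  classical
  set Wn : ℕ → ℝ := fun a => if h : a < N+1 then w ⟨a, h⟩ else 0 with hWn
  set S : ℕ → ℕ := fun a => ((Finset.range a).filter (fun x => Wn x * Wn (x+1) < 0)).card with hS
  have hWnval : ∀ a (h : a < N + 1), Wn a = w ⟨a, h⟩ := by
    intro a h; simp [hWn, show a ≤ N by omega]
  have hSmono : Monotone S := by
    intro a b hab
    apply Finset.card_le_card
    apply Finset.filter_subset_filter
    exact Finset.range_subset_range.mpr hab
  have hSsucc : ∀ a, S (a+1) = S a + (if Wn a * Wn (a+1) < 0 then 1 else 0) := by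
    intro a
    simp only [hS, Finset.range_add_one, Finset.filter_insert]
    split
    · rw [Finset.card_insert_of_notMem (by simp)]
    · simp
  have hSstep : ∀ a, S (a+1) ≤ S a + 1 := by
    intro a; rw [hSsucc a]; split <;> omega
  have hS0 : S 0 = 0 := by simp [hS]
  have hstep1 : ∀ a, a + 1 < N + 1 →
      0 < ((-1:ℝ)^(S a) * Wn a) * ((-1:ℝ)^(S (a+1)) * Wn (a+1)) := by
    intro a ha
    have hWa : Wn a ≠ 0 := by rw [hWnval a (by omega)]; exact hnz _
    have hWa1 : Wn (a+1) ≠ 0 := by rw [hWnval (a+1) ha]; exact hnz _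
    have hq : ((-1:ℝ)^(S a)) * ((-1:ℝ)^(S a)) = 1 := by
      rw [← pow_add]
      exact Even.neg_one_pow ⟨S a, rfl⟩
    rw [hSsucc a]
    split
    · rename_i hflip
      rw [pow_add, pow_one]
      nlinarith [hflip, hq]
    · rename_i hnoflip
      push_neg at hnoflip
      have hne : Wn a * Wn (a+1) ≠ 0 := mul_ne_zero hWa hWa1
      have hpos : 0 < Wn a * Wn (a+1) := lt_of_le_of_ne hnoflip (Ne.symm hne)
      rw [add_zero]
      nlinarith [hpos, hq]
  have hchain : ∀ d a, a + d < N + 1 →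
      0 < ((-1:ℝ)^(S a) * Wn a) * ((-1:ℝ)^(S (a+d)) * Wn (a+d)) := by
    intro d
    induction d with
    | zero =>
      intro a ha
      have hWa : Wn a ≠ 0 := by rw [hWnval a (by omega)]; exact hnz _
      have hne : ((-1:ℝ)^(S a) * Wn a) ≠ 0 := mul_ne_zero (by positivity) hWa
      simpa [add_zero] using mul_self_pos.mpr hne
    | succ c ihc =>
      intro a ha
      have h1 := ihc a (by omega)
      have h2 := hstep1 (a+c) (by omega)
      set X := (-1:ℝ)^(S a) * Wn a
      set Y := (-1:ℝ)^(S (a+c)) * Wn (a+c)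
      set Z2 := (-1:ℝ)^(S (a+c+1)) * Wn (a+c+1)
      have hXZ : 0 < (X * Y) * (Y * Z2) := mul_pos h1 h2
      have heq : (X * Y) * (Y * Z2) = (X * Z2) * (Y * Y) := by ring
      have hgoal : 0 < (X * Z2) := by
        by_contra hcon
        push_neg at hcon
        have : (X * Z2) * (Y * Y) ≤ 0 := mul_nonpos_of_nonpos_of_nonneg hcon (mul_self_nonneg Y)
        rw [← heq] at this
        linarith
      have haeq : a + (c+1) = a + c + 1 := by omega
      rw [haeq]
      exact hgoal
  have hchain' : ∀ a b, a ≤ b → b < N + 1 →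
      0 < ((-1:ℝ)^(S a) * Wn a) * ((-1:ℝ)^(S b) * Wn b) := by
    intro a b hab hb
    have h := hchain (b - a) a (by omega)
    have heq : a + (b - a) = b := by omega
    rwa [heq] at h
  by_cases hbig : K + 1 ≤ S N
  · -- many sign flips: extract an alternating subsequence of length K+2
    have hex : ∀ v : Fin (K+2), ∃ a, S a = (v:ℕ) ∧ a ≤ N := by
      intro v
      have hv : (v:ℕ) ≤ S N := by have := v.isLt; omega
      obtain ⟨a, ha, hfa⟩ := ivl S hS0 hSstep N (v:ℕ) hv
      exact ⟨a, hfa, ha⟩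
    set jf : Fin (K+2) → ℕ := fun v => Nat.find (hex v) with hjf
    have hjfspec : ∀ v, S (jf v) = (v:ℕ) ∧ jf v ≤ N := fun v => Nat.find_spec (hex v)
    have hjmono : ∀ v v' : Fin (K+2), v < v' → jf v < jf v' := by
      intro v v' hvv'
      by_contra hcon
      push_neg at hcon
      have := hSmono hcon
      rw [(hjfspec v).1, (hjfspec v').1] at this
      rw [Fin.lt_def] at hvv'
      omega
    set j : Fin (K+2) → Fin (N+1) := fun v => ⟨jf v, by have := (hjfspec v).2; omega⟩ with hj
    have hρ : w ⟨0, by omega⟩ ≠ 0 := hnz _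
    refine ⟨if 0 < w ⟨0, by omega⟩ then 1 else -1, by split <;> simp, j, ?_, ?_⟩
    · intro v v' hvv'
      simp only [hj, Fin.lt_def]
      exact hjmono v v' hvv'
    · intro t
      have hch := hchain' 0 (jf t) (Nat.zero_le _) (by have := (hjfspec t).2; omega)
      rw [hS0, pow_zero, one_mul, (hjfspec t).1] at hch
      have hW0 : Wn 0 = w ⟨0, by omega⟩ := hWnval 0 (by omega)
      have hWj : Wn (jf t) = w (j t) := hWnval (jf t) _
      rw [hW0, hWj] at hch
      split
      · rename_i hpos
        rw [one_mul]
        rcases mul_pos_iff.mp hch with ⟨_, h2⟩ | ⟨h1, _⟩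
        · exact h2
        · linarith
      · rename_i hneg
        have hneg' : w ⟨0, by omega⟩ < 0 := lt_of_le_of_ne (not_lt.mp hneg) hρ
        rcases mul_pos_iff.mp hch with ⟨h1, _⟩ | ⟨_, h2⟩
        · linarith
        · nlinarith [h2]
  · -- few sign flips: derive a contradiction
    exfalso
    push_neg at hbig
    set s := S N with hsdef
    have hsK : s ≤ K := by omega
    set e := K - s with hedef
    set P : ℕ → Prop := fun x => Wn x * Wn (x+1) < 0 with hP
    set fM : ℕ → Fin (N+1) := fun x => if h : x < N then ⟨x+1, by omega⟩ else 0 with hfM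
    set M : Finset (Fin (N+1)) := ((Finset.range N).filter P).image fM with hM
    have hMcard : M.card = s := by
      rw [hM, Finset.card_image_of_injOn]
      intro x hx y hy hxy
      have hx' : x < N := Finset.mem_range.mp (Finset.mem_filter.mp hx).1
      have hy' : y < N := Finset.mem_range.mp (Finset.mem_filter.mp hy).1
      simp only [hfM, dif_pos hx', dif_pos hy', Fin.mk.injEq] at hxy
      omega
    have hMcount : ∀ i : Fin (N+1), (M.filter (fun y => i < y)).card + S (i:ℕ) = s := by
      intro i
      have h1 : M.filter (fun y => i < y)
          = (((Finset.range N).filter P).filter (fun x => ¬ (x < (i:ℕ)))).image fM := by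
        rw [hM, Finset.filter_image]
        congr 1
        apply Finset.filter_congr
        intro x hx
        have hx' : x < N := Finset.mem_range.mp (Finset.mem_filter.mp hx).1
        simp only [Function.comp, hfM, dif_pos hx', Fin.lt_def]
        constructor
        · intro h; omega
        · intro h; omega
      have h2 : (((Finset.range N).filter P).filter (fun x => (x < (i:ℕ)))).card = S (i:ℕ) := by
        congr 1
        ext x
        simp only [Finset.mem_filter, Finset.mem_range, hS]
        have : (i:ℕ) ≤ N := by omega
        constructor
        · rintro ⟨⟨_, hp⟩, hlt⟩; exact ⟨hlt, hp⟩
        · rintro ⟨hlt, hp⟩; exact ⟨⟨by omega, hp⟩, hlt⟩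
      have h3 : (((Finset.range N).filter P).filter (fun x => (x < (i:ℕ)))).card
          + (((Finset.range N).filter P).filter (fun x => ¬ (x < (i:ℕ)))).card
          = ((Finset.range N).filter P).card :=
        Finset.card_filter_add_card_filter_not _
      have h4 : ((Finset.range N).filter P).card = s := rfl
      have h5 : ((((Finset.range N).filter P).filter (fun x => ¬ (x < (i:ℕ)))).image fM).card
          = (((Finset.range N).filter P).filter (fun x => ¬ (x < (i:ℕ)))).card := by
        apply Finset.card_image_of_injOn
        intro x hx y hy hxy
        have hx' : x < N := Finset.mem_range.mp (Finset.mem_filter.mp (Finset.mem_filter.mp hx).1).1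
        have hy' : y < N := Finset.mem_range.mp (Finset.mem_filter.mp (Finset.mem_filter.mp hy).1).1
        simp only [hfM, dif_pos hx', dif_pos hy', Fin.mk.injEq] at hxy
        omega
      rw [h1, h5]
      omega
    have hScap : ∀ i : Fin (N+1), S (i:ℕ) ≤ s := by
      intro i
      apply hSmono
      omega
    -- the top elements of the complement of M
    have hMc : Mᶜ.card = (N+1) - s := by
      rw [Finset.card_compl, hMcard]
      simp
    have heleN : e ≤ (N+1) - s := by omega
    set embc : Fin ((N+1) - s) → Fin (N+1) := fun x => Mᶜ.orderEmbOfFin hMc x with hembc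
    set T : Finset (Fin (N+1)) :=
      Finset.image (fun x : Fin e => embc ⟨(N+1) - s - e + (x:ℕ), by have := x.isLt; omega⟩)
        Finset.univ with hT
    have hTsub : ∀ y ∈ T, y ∈ Mᶜ := by
      intro y hy
      rw [hT] at hy
      obtain ⟨x, _, rfl⟩ := Finset.mem_image.mp hy
      exact Finset.orderEmbOfFin_mem _ hMc _
    have hTcard : T.card = e := by
      rw [hT, Finset.card_image_of_injective _ ?hinj, Finset.card_univ, Fintype.card_fin]
      case hinj =>
        intro x y hxy
        have := (Mᶜ.orderEmbOfFin hMc).injective hxy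
        rw [Fin.mk.injEq] at this
        exact Fin.ext (by omega)
    have hdisj : Disjoint M T := by
      rw [Finset.disjoint_left]
      intro y hyM hyT
      exact (Finset.mem_compl.mp (hTsub y hyT)) hyM
    set A : Finset (Fin (N+1)) := M ∪ T with hA
    have hAcard : A.card = K := by
      rw [hA, Finset.card_union_of_disjoint hdisj, hMcard, hTcard]
      omega
    have hbelowT : ∀ i : Fin (N+1), i ∉ A → ∀ y ∈ T, i < y := by
      intro i hiA y hyT
      have hiM : i ∉ M := fun h => hiA (Finset.mem_union_left _ h)
      have hiT : i ∉ T := fun h => hiA (Finset.mem_union_right _ h)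
      have hiMc : i ∈ Mᶜ := Finset.mem_compl.mpr hiM
      have : i ∈ (Mᶜ : Finset (Fin (N+1))) := hiMc
      have hrange : ∃ pos : Fin ((N+1) - s), embc pos = i := by
        have hr := Finset.range_orderEmbOfFin Mᶜ hMc
        have : i ∈ Set.range (Mᶜ.orderEmbOfFin hMc) := by
          rw [hr]
          exact_mod_cast hiMc
        obtain ⟨pos, hpos⟩ := this
        exact ⟨pos, hpos⟩
      obtain ⟨pos, hpos⟩ := hrange
      have hposlt : (pos:ℕ) < (N+1) - s - e := by
        by_contra hcon
        push_neg at hcon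
        apply hiT
        rw [hT]
        apply Finset.mem_image.mpr
        refine ⟨⟨(pos:ℕ) - ((N+1) - s - e), by have := pos.isLt; omega⟩, Finset.mem_univ _, ?_⟩
        rw [← hpos]
        congr 1
        apply Fin.ext
        simp only
        have := pos.isLt
        omega
      rw [hT] at hyT
      obtain ⟨x, _, rfl⟩ := Finset.mem_image.mp hyT
      rw [← hpos]
      apply (Mᶜ.orderEmbOfFin hMc).strictMono
      rw [Fin.lt_def]
      simp only
      omega
    have hpA : ∀ i : Fin (N+1), i ∉ A → (A.filter (fun y => y < i)).card = S (i:ℕ) := by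
      intro i hiA
      have hsplit : (A.filter (fun y => y < i)).card + (A.filter (fun y => ¬ y < i)).card = K := by
        rw [Finset.card_filter_add_card_filter_not, hAcard]
      have hne : (A.filter (fun y => ¬ y < i)) = A.filter (fun y => i < y) := by
        apply Finset.filter_congr
        intro y hy
        have hyne : y ≠ i := fun h => hiA (h ▸ hy)
        constructor
        · intro h; exact lt_of_le_of_ne (not_lt.mp h) (Ne.symm hyne)
        · intro h; exact not_lt.mpr (le_of_lt h)
      have hfu : A.filter (fun y => i < y) = (M.filter (fun y => i < y)) ∪ (T.filter (fun y => i < y)) := by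
        rw [hA, Finset.filter_union]
      have hTfull : T.filter (fun y => i < y) = T := by
        apply Finset.filter_true_of_mem
        intro y hy
        exact hbelowT i hiA y hy
      have hdisj2 : Disjoint (M.filter (fun y => i < y)) (T.filter (fun y => i < y)) :=
        Finset.disjoint_filter_filter hdisj
      have hcard2 : (A.filter (fun y => i < y)).card
          = (M.filter (fun y => i < y)).card + T.card := by
        rw [hfu, Finset.card_union_of_disjoint hdisj2, hTfull]
      have hMc2 := hMcount i
      have hSc := hScap i
      rw [hne, hcard2, hTcard] at hsplit
      omega
    -- enumerate A
    set af : Fin K → Fin (N+1) := fun t => A.orderEmbOfFin hAcard t with haf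
    have hafmono : StrictMono af := (A.orderEmbOfFin hAcard).strictMono
    have hafinj : Function.Injective af := fun x y h => hafmono.injective h
    have hafmem : ∀ t, af t ∈ A := fun t => Finset.orderEmbOfFin_mem A hAcard t
    have hafsurj : ∀ y ∈ A, ∃ t, af t = y := by
      intro y hy
      have hr := Finset.range_orderEmbOfFin A hAcard
      have : y ∈ Set.range (A.orderEmbOfFin hAcard) := by
        rw [hr]; exact_mod_cast hy
      obtain ⟨t, ht⟩ := this
      exact ⟨t, ht⟩
    -- the multilinear machinery
    set acol : Fin (N+1) → (Fin (K+1) → ℝ) := fun i r => C r i with hacol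
    set RowsM : (Fin (K+1) → ℝ) → Matrix (Fin (K+1)) (Fin (K+1)) ℝ :=
      fun z => Matrix.of (Fin.cons z (fun t => acol (af t))) with hRowsM
    have hupd : ∀ z, RowsM z = (RowsM 0).updateRow 0 z := by
      intro z
      ext x r
      refine Fin.cases ?_ (fun t => ?_) x
      · rw [Matrix.updateRow_self]
        simp [hRowsM]
      · rw [Matrix.updateRow_ne (Fin.succ_ne_zero t)]
        simp [hRowsM]
    have hLadd : ∀ u v : Fin (K+1) → ℝ, (RowsM (u + v)).det = (RowsM u).det + (RowsM v).det := by
      intro u v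
      rw [hupd (u+v), hupd u, hupd v, Matrix.det_updateRow_add]
    have hLsmul : ∀ (c : ℝ) (u : Fin (K+1) → ℝ), (RowsM (c • u)).det = c * (RowsM u).det := by
      intro c u
      rw [hupd (c • u), hupd u, Matrix.det_updateRow_smul]
    set L : (Fin (K+1) → ℝ) →ₗ[ℝ] ℝ :=
      { toFun := fun z => (RowsM z).det
        map_add' := hLadd
        map_smul' := hLsmul } with hL
    have hwsum : ∑ i : Fin (N+1), w i * (RowsM (acol i)).det = 0 := by
      have h1 : ∑ i : Fin (N+1), w i * (RowsM (acol i)).det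
          = L (∑ i : Fin (N+1), w i • acol i) := by
        rw [map_sum]
        apply Finset.sum_congr rfl
        intro i _
        rw [LinearMap.map_smul]
        rfl
      have h2 : (∑ i : Fin (N+1), w i • acol i) = 0 := by
        funext r
        rw [Finset.sum_apply]
        simp only [Pi.smul_apply, smul_eq_mul, hacol, Pi.zero_apply]
        rw [← hw r]
        apply Finset.sum_congr rfl
        intro i _
        ring
      rw [h1, h2, map_zero]
    have hdup : ∀ i ∈ A, (RowsM (acol i)).det = 0 := by
      intro i hi
      obtain ⟨t, ht⟩ := hafsurj i hi
      apply Matrix.det_zero_of_row_eq (Fin.succ_ne_zero t).symm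
      funext r
      simp [hRowsM, Fin.cons_zero, Fin.cons_succ, ht]
    -- positivity of the nonzero terms
    set ρ : ℝ := w ⟨0, by omega⟩ with hρ
    have hterm : ∀ i ∈ Aᶜ, 0 < ρ * (w i * (RowsM (acol i)).det) := by
      intro i hic
      have hiA : i ∉ A := Finset.mem_compl.mp hic
      set p := S (i:ℕ) with hp
      have hpK : p ≤ K := le_trans (hScap i) hsK
      -- position characterization
      have hpa : ∀ t : Fin K, af t < i ↔ (t:ℕ) < p := by
        have hset : (Finset.univ.filter (fun t : Fin K => af t < i)).card = p := by
          have himg : (Finset.univ.filter (fun t : Fin K => af t < i)).image af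
              = A.filter (fun y => y < i) := by
            ext y
            simp only [Finset.mem_image, Finset.mem_filter, Finset.mem_univ, true_and]
            constructor
            · rintro ⟨t, ht, rfl⟩
              exact ⟨hafmem t, ht⟩
            · rintro ⟨hyA, hyi⟩
              obtain ⟨t, rfl⟩ := hafsurj y hyA
              exact ⟨t, hyi, rfl⟩
          have := Finset.card_image_of_injective
            (Finset.univ.filter (fun t : Fin K => af t < i)) hafinj
          rw [himg] at this
          rw [← this, hpA i hiA]
        have hdown : ∀ t t' : Fin K, t ≤ t' →
            t' ∈ Finset.univ.filter (fun t : Fin K => af t < i) →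
            t ∈ Finset.univ.filter (fun t : Fin K => af t < i) := by
          intro t t' htt' ht'
          simp only [Finset.mem_filter, Finset.mem_univ, true_and] at ht' ⊢
          exact lt_of_le_of_lt (hafmono.monotone htt') ht'
        intro t
        have := seg _ hdown t
        simp only [Finset.mem_filter, Finset.mem_univ, true_and] at this
        rw [this, hset]
      have hpa2 : ∀ t : Fin K, p ≤ (t:ℕ) → i < af t := by
        intro t ht
        have h1 : ¬ (af t < i) := by
          rw [hpa]; omega
        have h2 : af t ≠ i := fun h => hiA (h ▸ hafmem t)
        exact lt_of_le_of_ne (not_lt.mp h1) (Ne.symm h2)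
      set merge : Fin (K+1) → Fin (N+1) := fun x =>
        if hx : (x:ℕ) < p then af ⟨(x:ℕ), by omega⟩
        else if hx2 : (x:ℕ) = p then i
        else af ⟨(x:ℕ) - 1, by have := x.isLt; omega⟩ with hmerge
      have hmergemono : StrictMono merge := by
        intro x y hxy
        rw [Fin.lt_def] at hxy
        simp only [hmerge]
        by_cases cx : (x:ℕ) < p
        · rw [dif_pos cx]
          by_cases cy : (y:ℕ) < p
          · rw [dif_pos cy]
            exact hafmono (by rw [Fin.lt_def]; exact hxy)
          · by_cases cy2 : (y:ℕ) = p
            · rw [dif_neg cy, dif_pos cy2]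
              exact (hpa _).mpr cx
            · rw [dif_neg cy, dif_neg cy2]
              apply hafmono
              rw [Fin.lt_def]
              simp only
              omega
        · by_cases cx2 : (x:ℕ) = p
          · rw [dif_neg cx, dif_pos cx2]
            have cy : ¬ ((y:ℕ) < p) := by omega
            have cy2 : ¬ ((y:ℕ) = p) := by omega
            rw [dif_neg cy, dif_neg cy2]
            exact hpa2 _ (by simp only; omega)
          · rw [dif_neg cx, dif_neg cx2]
            have cy : ¬ ((y:ℕ) < p) := by omega
            have cy2 : ¬ ((y:ℕ) = p) := by omega
            rw [dif_neg cy, dif_neg cy2]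
            apply hafmono
            rw [Fin.lt_def]
            simp only
            omega
      have hmergedet : 0 < Matrix.det (Matrix.of fun r x => C r (merge x)) := hC merge hmergemono
      set pF : Fin (K+1) := ⟨p, by omega⟩ with hpF
      set consf : Fin (K+1) → Fin (N+1) := Fin.cons i af with hconsf
      have hcyc : ∀ x : Fin (K+1), merge x = consf (Fin.cycleRange pF x) := by
        intro x
        rcases lt_trichotomy x pF with hx | hx | hx
        · rw [Fin.cycleRange_of_lt hx]
          have hxp : (x:ℕ) < p := by rw [Fin.lt_def] at hx; exact hx
          have hxK : (x:ℕ) < K := by omega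
          have hx1 : x + 1 = Fin.succ ⟨(x:ℕ), hxK⟩ := by
            apply Fin.ext
            rw [Fin.val_add_one_of_lt]
            · simp
            · rw [Fin.lt_def]
              simp only [Fin.val_last]
              omega
          rw [hx1, hconsf, Fin.cons_succ]
          simp only [hmerge, dif_pos hxp]
        · rw [hx, Fin.cycleRange_self, hconsf, Fin.cons_zero]
          simp only [hmerge, hpF]
          rw [dif_neg (by simp), dif_pos (by simp)]
        · rw [Fin.cycleRange_of_gt hx]
          have hxp : p < (x:ℕ) := by rw [Fin.lt_def] at hx; exact hx
          have hxK : (x:ℕ) - 1 < K := by have := x.isLt; omega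
          have hx1 : x = Fin.succ ⟨(x:ℕ) - 1, hxK⟩ := by
            apply Fin.ext
            simp only [Fin.val_succ]
            omega
          rw [hx1, hconsf, Fin.cons_succ]
          simp only [hmerge]
          rw [dif_neg (by simp only [Fin.val_succ]; omega), dif_neg (by simp only [Fin.val_succ]; omega)]
          congr 1
      have hsubT : RowsM (acol i) = (C.submatrix id consf)ᵀ := by
        ext x r
        refine Fin.cases ?_ (fun t => ?_) x
        · simp [hRowsM, hacol, Matrix.transpose_apply, Matrix.submatrix_apply, hconsf, Fin.cons_zero]
        · simp [hRowsM, hacol, Matrix.transpose_apply, Matrix.submatrix_apply, hconsf, Fin.cons_succ]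
      have hpermmat : (Matrix.of fun r x => C r (merge x))
          = (C.submatrix id consf).submatrix id (Fin.cycleRange pF) := by
        ext r x
        simp only [Matrix.of_apply, Matrix.submatrix_apply, id]
        rw [hcyc x]
      have hsign : ((Equiv.Perm.sign (Fin.cycleRange pF) : ℤ) : ℝ) = (-1)^p := by
        rw [Fin.sign_cycleRange]
        push_cast
        norm_num [hpF]
      have hdet1 : Matrix.det (Matrix.of fun r x => C r (merge x))
          = (-1)^p * (C.submatrix id consf).det := by
        rw [hpermmat, Matrix.det_permute' (Fin.cycleRange pF), hsign]
      have hdetA : (RowsM (acol i)).det = (-1:ℝ)^p * Matrix.det (Matrix.of fun r x => C r (merge x)) := by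
        rw [hsubT, Matrix.det_transpose]
        rw [hdet1]
        have hq : ((-1:ℝ)^p) * ((-1:ℝ)^p) = 1 := by
          rw [← pow_add]; exact Even.neg_one_pow ⟨p, rfl⟩
        rw [← mul_assoc, hq, one_mul]
      -- sign analysis
      have hch := hchain' 0 (i:ℕ) (Nat.zero_le _) i.isLt
      rw [hS0, pow_zero, one_mul] at hch
      have hW0 : Wn 0 = ρ := hWnval 0 (by omega)
      have hWi : Wn (i:ℕ) = w i := by
        rw [hWnval (i:ℕ) i.isLt]
      rw [hW0, hWi] at hch
      rw [hdetA]
      have heq2 : ρ * (w i * ((-1:ℝ)^p * Matrix.det (Matrix.of fun r x => C r (merge x))))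
          = (ρ * ((-1:ℝ)^(S (i:ℕ)) * w i)) * Matrix.det (Matrix.of fun r x => C r (merge x)) := by
        rw [hp]
        ring
      rw [heq2]
      exact mul_pos hch hmergedet
    -- conclude
    have hAzero : ∑ i ∈ A, w i * (RowsM (acol i)).det = 0 := by
      apply Finset.sum_eq_zero
      intro i hi
      rw [hdup i hi, mul_zero]
    have hsplit := Finset.sum_add_sum_compl A (fun i => w i * (RowsM (acol i)).det)
    rw [hAzero, zero_add, hwsum] at hsplit
    have hAcne : (Aᶜ : Finset (Fin (N+1))).Nonempty := by
      rw [← Finset.card_pos, Finset.card_compl, hAcard]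
      simp only [Fintype.card_fin]
      omega
    have hpos : 0 < ∑ i ∈ Aᶜ, ρ * (w i * (RowsM (acol i)).det) :=
      Finset.sum_pos hterm hAcne
    rw [← Finset.mul_sum, hsplit, mul_zero] at hpos
    exact lt_irrefl 0 hpos

lemma lemB : ∀ (n k : ℕ), k ≤ n → ∀ (C : Matrix (Fin k) (Fin n) ℝ), PosRowMinors C →
    ∀ w : Fin n → ℝ, (∀ a, ∑ i, C a i * w i = 0) → w ≠ 0 →
    ∃ ε : ℝ, (ε = 1 ∨ ε = -1) ∧ ∃ j : Fin (k+1) → Fin n, StrictMono j ∧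
      ∀ t : Fin (k+1), 0 < ε * (-1)^(t:ℕ) * w (j t) := by
  intro n
  induction n with
  | zero =>
    intro k hk C hC w hw hw0
    exfalso; apply hw0; funext i; exact absurd i.2 (by omega)
  | succ N ih =>
    intro k hk C hC w hw hw0
    rcases Nat.eq_zero_or_pos k with hk0 | hkpos
    · subst hk0
      have : ∃ i, w i ≠ 0 := by
        by_contra h
        push_neg at h
        exact hw0 (funext h)
      obtain ⟨i, hi⟩ := this
      have hmono1 : StrictMono (fun _ : Fin (0+1) => i) := by
        intro x y hxy
        exfalso
        have hx := x.isLt; have hy := y.isLt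
        rw [Fin.lt_def] at hxy
        omega
      rcases lt_or_gt_of_ne hi with hneg | hpos
      · exact ⟨-1, Or.inr rfl, fun _ => i, hmono1, fun t => by
          have ht := t.isLt
          have : (t : ℕ) = 0 := by omega
          rw [this]; simpa using hneg⟩
      · exact ⟨1, Or.inl rfl, fun _ => i, hmono1, fun t => by
          have ht := t.isLt
          have : (t : ℕ) = 0 := by omega
          rw [this]; simpa using hpos⟩
    obtain ⟨K, rfl⟩ : ∃ K, k = K + 1 := ⟨k - 1, by omega⟩
    by_cases hzero : ∃ i, w i = 0
    · obtain ⟨i, hi⟩ := hzero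
      by_cases hnk : N + 1 = K + 1
      · exfalso
        have hNK : N = K := by omega
        subst hNK
        have hdet : Matrix.det (Matrix.of fun a b => C a (id b)) ≠ 0 := (hC id strictMono_id).ne'
        have hmv : (Matrix.of fun a b => C a (id b)).mulVec w = 0 := by
          funext a
          simpa [Matrix.mulVec, dotProduct] using hw a
        exact hw0 (Matrix.eq_zero_of_mulVec_eq_zero hdet hmv)
      · have hkN : K + 1 ≤ N := by omega
        set C' : Matrix (Fin (K+1)) (Fin N) ℝ := Matrix.of (fun a b => C a (i.succAbove b)) with hC'def
        have hC' : PosRowMinors C' := by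
          intro g hg
          exact hC (fun b => i.succAbove (g b)) ((Fin.strictMono_succAbove i).comp hg)
        set w' : Fin N → ℝ := fun b => w (i.succAbove b) with hw'def
        have hw' : ∀ a, ∑ b, C' a b * w' b = 0 := by
          intro a
          have := hw a
          rw [Fin.sum_univ_succAbove (fun i' => C a i' * w i') i] at this
          rw [hi, mul_zero, zero_add] at this
          exact this
        have hw0' : w' ≠ 0 := by
          intro hcontra
          apply hw0
          funext i'
          by_cases hii : i' = i
          · rw [hii]; exact hi
          · obtain ⟨b, hb⟩ := Fin.exists_succAbove_eq hii
            rw [← hb]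
            exact congrFun hcontra b
        obtain ⟨ε, hε, j, hjmono, hjalt⟩ := ih (K+1) hkN C' hC' w' hw' hw0'
        exact ⟨ε, hε, fun t => i.succAbove (j t), (Fin.strictMono_succAbove i).comp hjmono, hjalt⟩
    · push_neg at hzero
      exact lemBcore hk C hC w hw hzero

lemma lemINS {n L : ℕ} (w : Fin n → ℝ) (ε : ℝ)
    (j : Fin (L+1) → Fin n) (hj : StrictMono j)
    (halt : ∀ t : Fin (L+1), 0 ≤ ε * (-1)^(t:ℕ) * w (j t))
    (u v : Fin n) (huv : u < v)
    (q : ℕ) (hqL : q ≤ L + 1)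
    (hq1 : ∀ t : Fin (L+1), (t:ℕ) < q → j t < u)
    (hq2 : ∀ t : Fin (L+1), q ≤ (t:ℕ) → v < j t)
    (hu : 0 ≤ ε * (-1)^q * w u) (hv : 0 ≤ ε * (-1)^(q+1) * w v) :
    ∃ j' : Fin (L+3) → Fin n, StrictMono j' ∧
      (∀ t : Fin (L+3), 0 ≤ ε * (-1)^(t:ℕ) * w (j' t)) ∧
      (∀ t : Fin (L+3), j' t = u ∨ j' t = v ∨ ∃ t0, j' t = j t0) := by
  set j' : Fin (L+3) → Fin n := fun t =>
    if h1 : (t:ℕ) < q then j ⟨(t:ℕ), by omega⟩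
    else if (t:ℕ) = q then u
    else if (t:ℕ) = q + 1 then v
    else j ⟨(t:ℕ) - 2, by have := t.isLt; omega⟩ with hj'
  have hval1 : ∀ (t : Fin (L+3)) (h : (t:ℕ) < q), j' t = j ⟨(t:ℕ), by omega⟩ := by
    intro t h; simp only [hj', dif_pos h]
  have hval2 : ∀ (t : Fin (L+3)) (h : (t:ℕ) = q), j' t = u := by
    intro t h; simp only [hj']
    rw [dif_neg (by omega), if_pos h]
  have hval3 : ∀ (t : Fin (L+3)) (h : (t:ℕ) = q + 1), j' t = v := by
    intro t h; simp only [hj']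
    rw [dif_neg (by omega), if_neg (by omega), if_pos h]
  have hval4 : ∀ (t : Fin (L+3)) (h : q + 2 ≤ (t:ℕ)), j' t = j ⟨(t:ℕ) - 2, by have := t.isLt; omega⟩ := by
    intro t h; simp only [hj']
    rw [dif_neg (by omega), if_neg (by omega), if_neg (by omega)]
  refine ⟨j', ?_, ?_, ?_⟩
  · intro x y hxy
    rw [Fin.lt_def] at hxy
    rcases Nat.lt_or_ge (x:ℕ) q with cx1 | cx'
    · rw [hval1 x cx1]
      rcases Nat.lt_or_ge (y:ℕ) q with cy1 | cy'
      · rw [hval1 y cy1]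
        exact hj (by rw [Fin.lt_def]; exact hxy)
      · have hju : j ⟨(x:ℕ), by omega⟩ < u := hq1 _ cx1
        rcases Nat.eq_or_lt_of_le cy' with cy2 | cy3
        · rw [hval2 y cy2.symm]; exact hju
        · rcases Nat.eq_or_lt_of_le cy3 with cy4 | cy5
          · rw [hval3 y cy4.symm]; exact lt_trans hju huv
          · rw [hval4 y (by omega)]
            exact lt_trans (lt_trans hju huv) (hq2 _ (by simp only; omega))
    · rcases Nat.eq_or_lt_of_le cx' with cx2 | cx3
      · rw [hval2 x cx2.symm]
        rcases Nat.eq_or_lt_of_le (show q + 1 ≤ (y:ℕ) by omega) with cy4 | cy5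
        · rw [hval3 y cy4.symm]; exact huv
        · rw [hval4 y (by omega)]
          exact lt_trans huv (hq2 _ (by simp only; omega))
      · rcases Nat.eq_or_lt_of_le cx3 with cx4 | cx5
        · rw [hval3 x cx4.symm, hval4 y (by omega)]
          exact hq2 _ (by simp only; omega)
        · rw [hval4 x (by omega), hval4 y (by omega)]
          exact hj (by rw [Fin.lt_def]; simp only; omega)
  · intro t
    rcases Nat.lt_or_ge (t:ℕ) q with c1 | c'
    · rw [hval1 t c1]
      exact halt ⟨(t:ℕ), by omega⟩
    · rcases Nat.eq_or_lt_of_le c' with c2 | c3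
      · rw [hval2 t c2.symm, ← c2]
        exact hu
      · rcases Nat.eq_or_lt_of_le c3 with c4 | c5
        · rw [hval3 t c4.symm, ← c4]
          exact hv
        · rw [hval4 t (by omega)]
          have hpow : (-1:ℝ)^(t:ℕ) = (-1:ℝ)^((t:ℕ) - 2) := by
            have h2 : (t:ℕ) = ((t:ℕ) - 2) + 2 := by omega
            rw [h2, pow_add]
            norm_num
          rw [hpow]
          exact halt ⟨(t:ℕ) - 2, by have := t.isLt; omega⟩
  · intro t
    rcases Nat.lt_or_ge (t:ℕ) q with c1 | c'
    · rw [hval1 t c1]; exact Or.inr (Or.inr ⟨_, rfl⟩)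
    · rcases Nat.eq_or_lt_of_le c' with c2 | c3
      · rw [hval2 t c2.symm]; exact Or.inl rfl
      · rcases Nat.eq_or_lt_of_le c3 with c4 | c5
        · rw [hval3 t c4.symm]; exact Or.inr (Or.inl rfl)
        · rw [hval4 t (by omega)]; exact Or.inr (Or.inr ⟨_, rfl⟩)

lemma lemGadget {n Lk : ℕ} (w : Fin n → ℝ)
    (j : Fin (Lk+1) → Fin n) (hj : StrictMono j) (ε : ℝ) (hε : ε = 1 ∨ ε = -1)
    (halt : ∀ t : Fin (Lk+1), 0 < ε * (-1)^(t:ℕ) * w (j t))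
    (im i0 ip : Fin n) (hmi : im < i0) (hip : i0 < ip)
    (h0 : w i0 = 0) (hsame : 0 < w im * w ip)
    (hmid : ∀ x : Fin n, im < x → x < ip → w x = 0) :
    ∃ j' : Fin (Lk+3) → Fin n, StrictMono j' ∧
      (∀ t : Fin (Lk+3), 0 ≤ ε * (-1)^(t:ℕ) * w (j' t)) ∧
      (∀ t : Fin (Lk+3), j' t = im ∨ j' t = i0 ∨ j' t = ip ∨ ∃ t0, j' t = j t0) := by
  classical
  have hjnz : ∀ t, w (j t) ≠ 0 := by
    intro t hzero
    have := halt t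
    rw [hzero, mul_zero] at this
    exact lt_irrefl 0 this
  have hwim : w im ≠ 0 := fun h => by rw [h, zero_mul] at hsame; exact lt_irrefl 0 hsame
  have hwip : w ip ≠ 0 := fun h => by rw [h, mul_zero] at hsame; exact lt_irrefl 0 hsame
  have hεnz : ε ≠ 0 := by rcases hε with h | h <;> rw [h] <;> norm_num
  set q0 : ℕ := (Finset.univ.filter (fun t : Fin (Lk+1) => j t < i0)).card with hq0
  have hq0L : q0 ≤ Lk + 1 := by
    rw [hq0]
    calc (Finset.univ.filter (fun t : Fin (Lk+1) => j t < i0)).card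
        ≤ Finset.univ.card := Finset.card_filter_le _ _
      _ = Lk + 1 := by simp
  have hseg := seg (Finset.univ.filter (fun t : Fin (Lk+1) => j t < i0)) (by
    intro a b hab hb
    simp only [Finset.mem_filter, Finset.mem_univ, true_and] at hb ⊢
    exact lt_of_le_of_lt (hj.monotone hab) hb)
  have hlt : ∀ t : Fin (Lk+1), (t:ℕ) < q0 → j t < i0 := by
    intro t ht
    have := (hseg t).mpr ht
    simpa using this
  have hgt : ∀ t : Fin (Lk+1), q0 ≤ (t:ℕ) → i0 < j t := by
    intro t ht
    have h1 : ¬ (j t < i0) := by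
      intro hcon
      have := (hseg t).mp (by simpa using hcon)
      omega
    have h2 : j t ≠ i0 := fun h => hjnz t (h ▸ h0)
    exact lt_of_le_of_ne (not_lt.mp h1) (Ne.symm h2)
  -- any j-point below i0 is ≤ im ; any above is ≥ ip
  have hbelow : ∀ t : Fin (Lk+1), j t < i0 → j t ≤ im := by
    intro t ht
    by_contra hcon
    push_neg at hcon
    exact hjnz t (hmid (j t) hcon (lt_trans ht hip))
  have habove : ∀ t : Fin (Lk+1), i0 < j t → ip ≤ j t := by
    intro t ht
    by_contra hcon
    push_neg at hcon
    exact hjnz t (hmid (j t) (lt_trans hmi ht) hcon)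
  by_cases hcase : 0 < ε * (-1)^q0 * w im
  · -- insert (im, i0) at position q0
    have hq1 : ∀ t : Fin (Lk+1), (t:ℕ) < q0 → j t < im := by
      intro t ht
      have h1 : j t ≤ im := hbelow t (hlt t ht)
      rcases lt_or_eq_of_le h1 with h | h
      · exact h
      · exfalso
        -- j t = im forces t = q0 - 1, giving a sign contradiction
        have htq : (t:ℕ) = q0 - 1 := by
          by_contra hne
          have htq2 : (t:ℕ) + 1 < q0 := by omega
          have ht' : (t:ℕ) + 1 < Lk + 1 := by omega
          set t' : Fin (Lk+1) := ⟨(t:ℕ)+1, ht'⟩ with ht'def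
          have h2 : j t < j t' := hj (by rw [Fin.lt_def]; simp only [ht'def]; omega)
          have h3 : j t' < i0 := hlt t' htq2
          rw [h] at h2
          exact hjnz t' (hmid (j t') h2 (lt_trans h3 hip))
        have hh := halt t
        rw [h, htq] at hh
        obtain ⟨q1, hq1e⟩ : ∃ q1, q0 = q1 + 1 := ⟨q0 - 1, by omega⟩
        have hpm : (-1:ℝ)^(q0-1) * (-1:ℝ)^q0 = -1 := by
          rw [hq1e]
          have he1 : q1 + 1 - 1 = q1 := by omega
          rw [he1, pow_succ, ← mul_assoc, ← pow_add]
          rw [Even.neg_one_pow ⟨q1, rfl⟩]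
          ring
        have hprod := mul_pos hh hcase
        have heqq : (ε * (-1:ℝ)^(q0-1) * w im) * (ε * (-1:ℝ)^q0 * w im)
            = -((ε * w im) * (ε * w im)) := by
          calc (ε * (-1:ℝ)^(q0-1) * w im) * (ε * (-1:ℝ)^q0 * w im)
              = (ε * w im) * (ε * w im) * ((-1:ℝ)^(q0-1) * (-1:ℝ)^q0) := by ring
            _ = -((ε * w im) * (ε * w im)) := by rw [hpm]; ring
        rw [heqq] at hprod
        nlinarith [mul_self_nonneg (ε * w im)]
    obtain ⟨j', hmono, hsig, hprov⟩ := lemINS w ε j hj (fun t => (halt t).le) im i0 hmi q0 hq0L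
      hq1 hgt hcase.le (by rw [h0]; simp)
    exact ⟨j', hmono, hsig, fun t => by
      rcases hprov t with h | h | ⟨t0, h⟩
      · exact Or.inl h
      · exact Or.inr (Or.inl h)
      · exact Or.inr (Or.inr (Or.inr ⟨t0, h⟩))⟩
  · -- insert (i0, ip) at position q0
    have him' : 0 < ε * (-1)^(q0+1) * w im := by
      push_neg at hcase
      have hne : ε * (-1)^q0 * w im ≠ 0 := by
        apply mul_ne_zero (mul_ne_zero hεnz (by positivity)) hwim
      have hlt0 : ε * (-1)^q0 * w im < 0 := lt_of_le_of_ne hcase hne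
      rw [pow_succ]
      nlinarith [hlt0]
    have hip' : 0 < ε * (-1)^(q0+1) * w ip := by
      nlinarith [him', hsame, sq_nonneg (w im)]
    have hq2 : ∀ t : Fin (Lk+1), q0 ≤ (t:ℕ) → ip < j t := by
      intro t ht
      have h1 : ip ≤ j t := habove t (hgt t ht)
      rcases lt_or_eq_of_le h1 with h | h
      · exact h
      · exfalso
        -- j t = ip forces t = q0, giving a sign contradiction
        have htq : (t:ℕ) = q0 := by
          by_contra hne
          have htq2 : q0 < (t:ℕ) := by omega
          have ht' : q0 < Lk + 1 := by omega
          set t' : Fin (Lk+1) := ⟨q0, ht'⟩ with ht'def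
          have h2 : j t' < j t := hj (by rw [Fin.lt_def]; simp only [ht'def]; omega)
          have h3 : i0 < j t' := hgt t' (by simp [ht'def])
          rw [← h] at h2
          exact hjnz t' (hmid (j t') (lt_trans hmi h3) h2)
        have hh := halt t
        rw [← h, htq] at hh
        have hpm : (-1:ℝ)^(q0) * (-1:ℝ)^(q0+1) = -1 := by
          rw [pow_succ, ← mul_assoc, ← pow_add]
          rw [Even.neg_one_pow ⟨q0, rfl⟩]
          ring
        have hprod := mul_pos hh hip'
        have heqq : (ε * (-1:ℝ)^q0 * w ip) * (ε * (-1:ℝ)^(q0+1) * w ip)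
            = -((ε * w ip) * (ε * w ip)) := by
          calc (ε * (-1:ℝ)^q0 * w ip) * (ε * (-1:ℝ)^(q0+1) * w ip)
              = (ε * w ip) * (ε * w ip) * ((-1:ℝ)^q0 * (-1:ℝ)^(q0+1)) := by ring
            _ = -((ε * w ip) * (ε * w ip)) := by rw [hpm]; ring
        rw [heqq] at hprod
        nlinarith [mul_self_nonneg (ε * w ip)]
    obtain ⟨j', hmono, hsig, hprov⟩ := lemINS w ε j hj (fun t => (halt t).le) i0 ip hip q0 hq0L
      hlt hq2 (by rw [h0]; simp) hip'.le
    exact ⟨j', hmono, hsig, fun t => by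
      rcases hprov t with h | h | ⟨t0, h⟩
      · exact Or.inr (Or.inl h)
      · exact Or.inr (Or.inr (Or.inl h))
      · exact Or.inr (Or.inr (Or.inr ⟨t0, h⟩))⟩

/-- Forbidden vanishing: for `m = 2r+1` odd, `Z`, `C` with positive maximal minors,
`Y = C Z`, `B` a pair list of length `2r`, and `i₀ ∈ [n] ∖ B` with `2 ≤ i₀ ≤ n−1`
(1-indexed; `1 ≤ i₀ ≤ n−2` in 0-indexed `Fin n`), let `i₀⁻` (resp. `i₀⁺`) be its
predecessor (resp. successor) in `[n] ∖ B`.  Then it is impossible that `⟨Y,B,i₀⟩ = 0`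
while `⟨Y,B,i₀⁻⟩` and `⟨Y,B,i₀⁺⟩` are nonzero of the same sign. -/
theorem stmt13 (k r n : ℕ) (hmn : k + (2 * r + 1) ≤ n)
    (Z : Matrix (Fin n) (Fin (k + (2 * r + 1))) ℝ) (hZ : PosMaximalMinors Z)
    (C : Matrix (Fin k) (Fin n) ℝ) (hC : PosRowMinors C)
    (B : Fin (2 * r) → Fin n) (hB : StrictMono B) (hpair : ConsecPairs B)
    (i0 im ip : Fin n)
    (h1 : 1 ≤ (i0 : ℕ)) (h2 : (i0 : ℕ) ≤ n - 2)
    (hmi : im < i0) (hip : i0 < ip)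
    (h0B : ∀ a, B a ≠ i0) (hmB : ∀ a, B a ≠ im) (hpB : ∀ a, B a ≠ ip)
    (hmax : ∀ j : Fin n, im < j → j < i0 → ∃ a, B a = j)
    (hmin : ∀ j : Fin n, i0 < j → j < ip → ∃ a, B a = j) :
    ¬ (twistor Z (C * Z) (Fin.snoc B i0) = 0 ∧
        0 < twistor Z (C * Z) (Fin.snoc B im) * twistor Z (C * Z) (Fin.snoc B ip)) := by
  classical
  rintro ⟨hzero0, hprod0⟩
  set Y : Matrix (Fin k) (Fin (k + (2*r+1))) ℝ := C * Z with hY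
  set w : Fin n → ℝ := fun i => twistor Z Y (Fin.snoc B i) with hwdef
  have hzero : w i0 = 0 := hzero0
  have hprod : 0 < w im * w ip := hprod0
  -- matrix-valued function of the last row
  set Rbase : Fin (2*r) → (Fin (k+(2*r+1)) → ℝ) := fun b' => Z (B b') with hRbase
  set Mfun : (Fin (k+(2*r+1)) → ℝ) → Matrix (Fin k ⊕ Fin (2*r+1)) (Fin k ⊕ Fin (2*r+1)) ℝ :=
    fun z => Matrix.of fun i j => Sum.elim (fun a => Y a) (Fin.snoc Rbase z) i (finSumFinEquiv j)
    with hMfun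
  have hMw : ∀ i : Fin n, w i = (Mfun (Z i)).det := by
    intro i
    rw [hwdef]
    simp only
    unfold twistor
    congr 1
    ext x c
    rcases x with a | b
    · simp [hMfun]
    · simp only [hMfun, Matrix.of_apply, Sum.elim_inr]
      induction b using Fin.lastCases with
      | last => rw [Fin.snoc_last, Fin.snoc_last]
      | cast b' => rw [Fin.snoc_castSucc, Fin.snoc_castSucc]
  have hupd : ∀ z, Mfun z = (Mfun 0).updateRow (Sum.inr (Fin.last (2*r)))
      (fun c => z (finSumFinEquiv c)) := by
    intro z
    ext x c
    by_cases hx : x = Sum.inr (Fin.last (2*r))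
    · subst hx
      rw [Matrix.updateRow_self]
      simp [hMfun, Fin.snoc_last]
    · rw [Matrix.updateRow_ne hx]
      rcases x with a | b
      · simp [hMfun]
      · have hbne : b ≠ Fin.last (2*r) := fun h => hx (by rw [h])
        obtain ⟨b', rfl⟩ := Fin.exists_castSucc_eq.mpr hbne
        simp [hMfun, Fin.snoc_castSucc]
  set Ld : (Fin (k+(2*r+1)) → ℝ) →ₗ[ℝ] ℝ :=
    { toFun := fun z => (Mfun z).det
      map_add' := by
        intro z z'
        rw [hupd (z + z'), hupd z, hupd z']
        have he : (fun c => (z + z') (finSumFinEquiv c))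
            = (fun c => z (finSumFinEquiv c)) + (fun c => z' (finSumFinEquiv c)) := rfl
        rw [he, Matrix.det_updateRow_add]
      map_smul' := by
        intro a z
        rw [hupd (a • z), hupd z]
        have he : (fun c => (a • z) (finSumFinEquiv c))
            = a • (fun c => z (finSumFinEquiv c)) := rfl
        rw [he, Matrix.det_updateRow_smul]
        rfl } with hLd
  set α : Fin (k+(2*r+1)) → ℝ := fun c => Ld (fun c' => if c = c' then 1 else 0) with hα
  have hlin : ∀ z, Ld z = ∑ c, z c * α c := by
    intro z
    conv_lhs => rw [pi_eq_sum_univ z]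
    rw [map_sum]
    apply Finset.sum_congr rfl
    intro c _
    rw [LinearMap.map_smul, smul_eq_mul, hα]
  have hwL : ∀ i, w i = ∑ c, Z i c * α c := by
    intro i
    rw [hMw i, ← hlin]
    rfl
  have hwB : ∀ b : Fin (2*r), w (B b) = 0 := by
    intro b
    rw [hMw (B b)]
    apply Matrix.det_zero_of_row_eq (i := Sum.inr (Fin.castSucc b)) (j := Sum.inr (Fin.last (2*r)))
    · intro h
      have := Sum.inr_injective h
      exact absurd this (Fin.castSucc_lt_last b).ne
    · funext c
      simp only [hMfun, Matrix.of_apply, Sum.elim_inr]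
      rw [Fin.snoc_castSucc, Fin.snoc_last]
  have hCw : ∀ a, ∑ i, C a i * w i = 0 := by
    intro a
    have h1' : ∑ i, C a i * w i = Ld (∑ i, C a i • Z i) := by
      rw [map_sum]
      apply Finset.sum_congr rfl
      intro i _
      rw [LinearMap.map_smul, smul_eq_mul]
      congr 1
      rw [hMw i]
      rfl
    have h2' : (∑ i : Fin n, C a i • Z i) = Y a := by
      funext c
      rw [Finset.sum_apply]
      simp only [Pi.smul_apply, smul_eq_mul]
      rw [hY, Matrix.mul_apply]
    rw [h1', h2']
    have : (Mfun (Y a)).det = 0 := by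
      apply Matrix.det_zero_of_row_eq (i := Sum.inl a) (j := Sum.inr (Fin.last (2*r)))
      · simp
      · funext c
        simp only [hMfun, Matrix.of_apply, Sum.elim_inl, Sum.elim_inr]
        rw [Fin.snoc_last]
    exact this
  have hwim : w im ≠ 0 := fun h => by rw [h, zero_mul] at hprod; exact lt_irrefl 0 hprod
  have hw0 : w ≠ 0 := fun h => hwim (congrFun h im)
  -- middle zeros
  have hmid : ∀ x : Fin n, im < x → x < ip → w x = 0 := by
    intro x hx1 hx2
    by_cases hxi : x = i0
    · rw [hxi]; exact hzero
    · rcases lt_or_gt_of_ne hxi with h | h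
      · obtain ⟨a, ha⟩ := hmax x hx1 h
        rw [← ha]; exact hwB a
      · obtain ⟨a, ha⟩ := hmin x h hx2
        rw [← ha]; exact hwB a
  -- step 1: strictly alternating sequence of length k+1 from lemB
  obtain ⟨ε, hε, j0, hj0mono, hj0alt⟩ := lemB n k (by omega) C hC w hCw hw0
  -- step 2: gadget insertion
  obtain ⟨j1, hj1mono, hj1sig, hj1prov⟩ := lemGadget w j0 hj0mono ε hε hj0alt im i0 ip hmi hip
    hzero hprod hmid
  have hj0nz : ∀ t, w (j0 t) ≠ 0 := by
    intro t hzt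
    have := hj0alt t
    rw [hzt, mul_zero] at this
    exact lt_irrefl 0 this
  -- step 3: insert the pairs of B one by one
  have loop : ∀ u : ℕ, u ≤ r → ∃ Lc : ℕ, Lc = k + 2 + 2*u ∧
      ∃ j2 : Fin (Lc+1) → Fin n, StrictMono j2 ∧
        (∀ t : Fin (Lc+1), 0 ≤ ε * (-1)^(t:ℕ) * w (j2 t)) ∧
        (∀ (t : Fin (Lc+1)) (x : Fin (2*r)), j2 t = B x → (x:ℕ) < 2*u) := by
    intro u
    induction u with
    | zero =>
      intro _
      refine ⟨k+2, by ring, j1, hj1mono, hj1sig, ?_⟩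
      intro t x hx
      exfalso
      rcases hj1prov t with h | h | h | ⟨t0, h⟩
      · exact hmB x (by rw [← hx, h])
      · exact h0B x (by rw [← hx, h])
      · exact hpB x (by rw [← hx, h])
      · apply hj0nz t0
        rw [← h, hx]
        exact hwB x
    | succ u' ihu =>
      intro hu
      obtain ⟨Lc, hLc, j2, hmono, hsig, hprov⟩ := ihu (by omega)
      have h2u : 2*u' < 2*r := by omega
      have h2u1 : 2*u' + 1 < 2*r := by omega
      set uu : Fin n := B ⟨2*u', h2u⟩ with huu
      set vv : Fin n := B ⟨2*u'+1, h2u1⟩ with hvv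
      have hconsec : (vv:ℕ) = (uu:ℕ) + 1 := by
        apply hpair ⟨2*u', h2u⟩ ⟨2*u'+1, h2u1⟩
        · simp
        · simp [Nat.mul_mod_right]
      have huvlt : uu < vv := hB (by rw [Fin.lt_def]; simp)
      set q : ℕ := (Finset.univ.filter (fun t : Fin (Lc+1) => j2 t < uu)).card with hq
      have hseg2 := seg (Finset.univ.filter (fun t : Fin (Lc+1) => j2 t < uu)) (by
        intro a b hab hb
        simp only [Finset.mem_filter, Finset.mem_univ, true_and] at hb ⊢
        exact lt_of_le_of_lt (hmono.monotone hab) hb)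
      have hqL : q ≤ Lc + 1 := by
        rw [hq]
        calc (Finset.univ.filter (fun t : Fin (Lc+1) => j2 t < uu)).card
            ≤ Finset.univ.card := Finset.card_filter_le _ _
          _ = Lc + 1 := by simp
      have hq1 : ∀ t : Fin (Lc+1), (t:ℕ) < q → j2 t < uu := by
        intro t ht
        have := (hseg2 t).mpr ht
        simpa using this
      have hq2 : ∀ t : Fin (Lc+1), q ≤ (t:ℕ) → vv < j2 t := by
        intro t ht
        have hn1 : ¬ (j2 t < uu) := by
          intro hcon
          have := (hseg2 t).mp (by simpa using hcon)
          omega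
        have hne1 : j2 t ≠ uu := by
          intro h
          have := hprov t ⟨2*u', h2u⟩ h
          simp at this
        have hgt1 : uu < j2 t := lt_of_le_of_ne (not_lt.mp hn1) (Ne.symm hne1)
        have hne2 : j2 t ≠ vv := by
          intro h
          have := hprov t ⟨2*u'+1, h2u1⟩ h
          simp at this
        rw [Fin.lt_def] at hgt1 ⊢
        have : (j2 t : ℕ) ≠ (vv : ℕ) := fun h => hne2 (Fin.ext h)
        omega
      obtain ⟨j', hmono', hsig', hprov'⟩ := lemINS w ε j2 hmono hsig uu vv huvlt q hqL hq1 hq2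
        (by rw [huu, hwB]; simp) (by rw [hvv, hwB]; simp)
      refine ⟨Lc+2, by omega, j', hmono', hsig', ?_⟩
      intro t x hx
      rcases hprov' t with h | h | ⟨t0, h⟩
      · have hBx : B x = B ⟨2*u', h2u⟩ := by rw [← hx, h, huu]
        have hxval : x = ⟨2*u', h2u⟩ := hB.injective hBx
        rw [hxval]
        simp only
        omega
      · have hBx : B x = B ⟨2*u'+1, h2u1⟩ := by rw [← hx, h, hvv]
        have hxval : x = ⟨2*u'+1, h2u1⟩ := hB.injective hBx
        rw [hxval]
        simp only
        omega
      · rw [hx] at h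
        have := hprov t0 x h.symm
        omega
  obtain ⟨Lc, hLc, j2, hmono, hsig, _⟩ := loop r (le_refl r)
  -- step 4: truncate to length (k + (2r+1)) + 1 and apply lemA
  have hLcge : (k + (2*r+1)) + 1 ≤ Lc + 1 := by omega
  set jf : Fin ((k + (2*r+1))+1) → Fin n := fun t => j2 ⟨(t:ℕ), by have := t.isLt; omega⟩ with hjf
  have hjfmono : StrictMono jf := by
    intro x y hxy
    apply hmono
    rw [Fin.lt_def] at hxy ⊢
    simpa using hxy
  have hjfsig : ∀ t : Fin ((k + (2*r+1))+1), 0 ≤ ε * (-1)^(t:ℕ) * (∑ c, Z (jf t) c * α c) := by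
    intro t
    rw [← hwL]
    exact hsig ⟨(t:ℕ), by have := t.isLt; omega⟩
  have hα0 : α = 0 := lemA Z hZ α jf hjfmono ε hε hjfsig
  apply hwim
  rw [hwL im, hα0]
  simp
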